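/- Let G be the group of bijections of the real plane generated by the translation T(u,v) = (u+1, v+1) and the map R(u,v) = (-v, -u). Then: (i) for every point (u,v) in R^2 with u >= v there exists g in G such that g(u,v) = (u',v') satisfies u' >= v' and 0 <= u' + v' <= 1; (ii) if (u,v) and (u',v') both satisfy u >= v, u' >= v', 0 < u+v < 1, 0 < u'+v' < 1, and lie in the same G-orbit, then (u,v) = (u',v'). -/

import Mathlib

/-- The translation `T(u,v) = (u+1, v+1)` as a bijection of the real plane. -/
def shearT : Equiv.Perm (ℝ × ℝ) where
  toFun p := (p.1 + 1, p.2 + 1)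
  invFun p := (p.1 - 1, p.2 - 1)
  left_inv p := by simp
  right_inv p := by simp

/-- The map `R(u,v) = (-v, -u)` as a bijection of the real plane. -/
def reflR : Equiv.Perm (ℝ × ℝ) where
  toFun p := (-p.2, -p.1)
  invFun p := (-p.2, -p.1)
  left_inv p := by simp
  right_inv p := by simp

lemma shearT_apply (p : ℝ × ℝ) : shearT p = (p.1 + 1, p.2 + 1) := rfl
lemma reflR_apply (p : ℝ × ℝ) : reflR p = (-p.2, -p.1) := rfl
lemma shearT_inv_apply (p : ℝ × ℝ) : shearT⁻¹ p = (p.1 - 1, p.2 - 1) := rfl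

lemma shearT_zpow (n : ℤ) (p : ℝ × ℝ) : (shearT ^ n) p = (p.1 + n, p.2 + n) := by
  induction n using Int.induction_on generalizing p with
  | zero => simp
  | succ n ih =>
      have h : shearT ^ ((n : ℤ) + 1) = shearT ^ (n : ℤ) * shearT := zpow_add_one _ _
      rw [h, Equiv.Perm.mul_apply, shearT_apply, ih]
      push_cast
      exact Prod.ext (by ring) (by ring)
  | pred n ih =>
      have h : shearT ^ (-(n : ℤ) - 1) = shearT ^ (-(n : ℤ)) * shearT⁻¹ := zpow_sub_one _ _
      rw [h, Equiv.Perm.mul_apply, shearT_inv_apply, ih]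
      push_cast
      exact Prod.ext (by ring) (by ring)

lemma key : ∀ g ∈ Subgroup.closure ({shearT, reflR} : Set (Equiv.Perm (ℝ × ℝ))),
    ∀ p : ℝ × ℝ, ((g p).1 - (g p).2 = p.1 - p.2) ∧
      ∃ ε k : ℤ, (ε = 1 ∨ ε = -1) ∧ (g p).1 + (g p).2 = ε * (p.1 + p.2) + 2 * k := by
  intro g hg
  induction hg using Subgroup.closure_induction with
  | mem x hx =>
      rcases hx with h | h
      · subst h; intro p; refine ⟨by simp [shearT_apply], 1, 1, Or.inl rfl, ?_⟩
        simp [shearT_apply]; ring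
      · simp only [Set.mem_singleton_iff] at h; subst h
        intro p; refine ⟨by simp [reflR_apply]; ring, -1, 0, Or.inr rfl, ?_⟩
        simp only [reflR_apply]; push_cast; ring
  | one => intro p; exact ⟨rfl, 1, 0, Or.inl rfl, by simp⟩
  | mul a b ha hb iha ihb =>
      intro p
      obtain ⟨hd, ε, k, hε, hs⟩ := ihb p
      obtain ⟨hd', ε', k', hε', hs'⟩ := iha (b p)
      refine ⟨by simpa [hd] using hd', ε' * ε, ε' * k + k', ?_, ?_⟩
      · rcases hε with h | h <;> rcases hε' with h' | h' <;> simp [h, h']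
      · simp only [Equiv.Perm.mul_apply]
        rw [hs', hs]; push_cast; ring
  | inv a ha iha =>
      intro p
      obtain ⟨hd, ε, k, hε, hs⟩ := iha (a⁻¹ p)
      simp only [show a (a⁻¹ p) = p from Equiv.apply_symm_apply a p] at hd hs
      refine ⟨hd.symm, ε, -ε * k, hε, ?_⟩
      rcases hε with h | h <;> subst h <;> push_cast <;> push_cast at hs <;> linarith

theorem stmt0 :
    (∀ p : ℝ × ℝ, p.2 ≤ p.1 →
      ∃ g ∈ Subgroup.closure ({shearT, reflR} : Set (Equiv.Perm (ℝ × ℝ))),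
        (g p).2 ≤ (g p).1 ∧ 0 ≤ (g p).1 + (g p).2 ∧ (g p).1 + (g p).2 ≤ 1) ∧
    (∀ p q : ℝ × ℝ, p.2 ≤ p.1 → q.2 ≤ q.1 →
      0 < p.1 + p.2 → p.1 + p.2 < 1 →
      0 < q.1 + q.2 → q.1 + q.2 < 1 →
      (∃ g ∈ Subgroup.closure ({shearT, reflR} : Set (Equiv.Perm (ℝ × ℝ))), g p = q) →
      p = q) := by
  have hT : shearT ∈ Subgroup.closure ({shearT, reflR} : Set (Equiv.Perm (ℝ × ℝ))) :=
    Subgroup.subset_closure (Set.mem_insert _ _)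
  have hR : reflR ∈ Subgroup.closure ({shearT, reflR} : Set (Equiv.Perm (ℝ × ℝ))) :=
    Subgroup.subset_closure (by simp)
  constructor
  · intro p hp
    set s : ℝ := p.1 + p.2 with hs
    set m : ℤ := ⌊s / 2⌋ with hm
    have h1 : (2 : ℝ) * m ≤ s := by
      have := Int.floor_le (s / 2); linarith
    have h2 : s < 2 * m + 2 := by
      have := Int.lt_floor_add_one (s / 2); linarith
    by_cases hc : s - 2 * m ≤ 1
    · refine ⟨shearT ^ (-m), Subgroup.zpow_mem _ hT _, ?_⟩
      rw [shearT_zpow]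
      push_cast
      constructor
      · simpa using hp
      constructor <;> [linarith; linarith]
    · refine ⟨shearT * reflR * shearT ^ (-m), ?_, ?_⟩
      · exact Subgroup.mul_mem _ (Subgroup.mul_mem _ hT hR) (Subgroup.zpow_mem _ hT _)
      · simp only [Equiv.Perm.mul_apply]
        rw [shearT_zpow, reflR_apply, shearT_apply]
        push_cast
        refine ⟨by linarith, by linarith, by linarith⟩
  · rintro p q hp hq hp0 hp1 hq0 hq1 ⟨g, hg, hgp⟩
    obtain ⟨hd, ε, k, hε, hs⟩ := key g hg p
    rw [hgp] at hd hs
    have hsum : q.1 + q.2 = p.1 + p.2 := by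
      rcases hε with h | h <;> subst h <;> push_cast at hs
      · have hk : k = 0 := by
          by_contra hk
          rcases lt_or_gt_of_ne hk with h' | h'
          · have : (k : ℝ) ≤ -1 := by exact_mod_cast Int.le_of_lt_add_one (by simpa using h')
            linarith
          · have : (1 : ℝ) ≤ k := by exact_mod_cast h'
            linarith
        rw [hk] at hs; push_cast at hs; linarith
      · exfalso
        have h0 : (0 : ℝ) < 2 * k := by linarith
        have h2 : (2 : ℝ) * k < 2 := by linarith
        have : (0 : ℤ) < k := by exact_mod_cast (by nlinarith : (0:ℝ) < (k:ℝ))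
        have : (k : ℝ) < 1 := by linarith
        have : k < 1 := by exact_mod_cast this
        omega
    have h1 : p.1 = q.1 := by linarith
    have h2 : p.2 = q.2 := by linarith
    exact Prod.ext h1 h2
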